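/- arXiv:1307.5725 — 5 statements merged into one kernel-verified Lean document; each statement's English description precedes it below -/
import Mathlib

section
/- Let A ∈ ℝ^{m×N} have the (k, γ_k)-NSP with γ_k < 1. Let x, x* ∈ ℝ^N with Ax* = Ax and ‖x*‖₁ ≤ ‖x‖₁, and let Λ be the support of the best k-term approximation of x. Then ‖(x − x*)|_{Λᶜ}‖₁ ≤ (2/(1−γ_k)) σ_k(x)₁. -/
open Finset

/-- ℓ¹ norm of a vector. -/
noncomputable def l1 {N : ℕ} (x : Fin N → ℝ) : ℝ := ∑ i, |x i|

/-- ℓ² norm of a vector. -/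
noncomputable def l2 {n : ℕ} (x : Fin n → ℝ) : ℝ := Real.sqrt (∑ i, (x i) ^ 2)

/-- Restriction of a vector to an index set (zero off the set). -/
noncomputable def restr {N : ℕ} (Λ : Finset (Fin N)) (x : Fin N → ℝ) : Fin N → ℝ :=
  fun i => if i ∈ Λ then x i else 0

/-- Support of a vector as a finset. -/
noncomputable def supp {N : ℕ} (z : Fin N → ℝ) : Finset (Fin N) :=
  univ.filter (fun i => z i ≠ 0)

/-- Null Space Property of order `k` with constant `γ`. -/
def NSP {m N : ℕ} (A : Matrix (Fin m) (Fin N) ℝ) (k : ℕ) (γ : ℝ) : Prop :=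
  ∀ z : Fin N → ℝ, A.mulVec z = 0 → ∀ Λ : Finset (Fin N), Λ.card ≤ k →
    l1 (restr Λ z) ≤ γ * l1 (restr Λᶜ z)

/-- Restricted Isometry Property of order `K` with constant `δ` (norm version). -/
noncomputable def RIP {m N : ℕ} (A : Matrix (Fin m) (Fin N) ℝ) (K : ℕ) (δ : ℝ) : Prop :=
  ∀ z : Fin N → ℝ, (supp z).card ≤ K →
    (1 - δ) * l2 z ≤ l2 (A.mulVec z) ∧ l2 (A.mulVec z) ≤ (1 + δ) * l2 z

/-- ℓ¹ best `k`-term approximation error. -/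
noncomputable def sigma1 {N : ℕ} (k : ℕ) (x : Fin N → ℝ) : ℝ :=
  sInf {t : ℝ | ∃ z : Fin N → ℝ, (supp z).card ≤ k ∧ t = l1 (x - z)}

/-- Index set of entries exceeding `r` in absolute value. -/
noncomputable def Sr {N : ℕ} (r : ℝ) (x : Fin N → ℝ) : Finset (Fin N) :=
  univ.filter (fun i => r < |x i|)

/-- The Hölder constant κ_p(N,k). -/
noncomputable def kappa (p : ℝ) (N k : ℕ) : ℝ :=
  if p = 1 then 1 else ((N - k : ℕ) : ℝ) ^ (1 - 1 / p)

/-- Membership in the class 𝒮^p_{η,k,r} of sparse vectors affected by bounded noise. -/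
noncomputable def inClass {N : ℕ} (p η : ℝ) (k : ℕ) (r : ℝ) (x : Fin N → ℝ) : Prop :=
  (Sr r x).card ≤ k ∧ ∑ i ∈ (Sr r x)ᶜ, |x i| ^ p ≤ η ^ p

/-- Entrywise hard thresholding with threshold `t`. -/
noncomputable def hardThr {N : ℕ} (t : ℝ) (z : Fin N → ℝ) : Fin N → ℝ :=
  fun i => if t < |z i| then z i else 0

lemma l1_restr_eq {N : ℕ} (Λ : Finset (Fin N)) (v : Fin N → ℝ) :
    l1 (restr Λ v) = ∑ i ∈ Λ, |v i| := by
  unfold l1 restr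
  rw [← Finset.sum_subset (Finset.subset_univ Λ)]
  · exact Finset.sum_congr rfl (fun i hi => by simp [hi])
  · intro i _ hi; simp [hi]

theorem stmt1 {m N : ℕ} (A : Matrix (Fin m) (Fin N) ℝ) (k : ℕ) (γ : ℝ)
    (hNSP : NSP A k γ) (hγ : γ < 1) (x xs : Fin N → ℝ)
    (hfeas : A.mulVec xs = A.mulVec x) (hl1 : l1 xs ≤ l1 x)
    (Λ : Finset (Fin N)) (hcard : Λ.card = k)
    (hbig : ∀ i ∈ Λ, ∀ j ∉ Λ, |x j| ≤ |x i|) :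
    l1 (restr Λᶜ (x - xs)) ≤ (2 / (1 - γ)) * l1 (restr Λᶜ x) := by
  set z : Fin N → ℝ := x - xs with hz
  have hker : A.mulVec z = 0 := by
    rw [hz, Matrix.mulVec_sub, hfeas, sub_self]
  have hNSPz := hNSP z hker Λ (le_of_eq hcard)
  rw [l1_restr_eq, l1_restr_eq] at hNSPz
  rw [l1_restr_eq, l1_restr_eq]
  -- split l1 norms over Λ and Λᶜ
  have hsplit : ∀ v : Fin N → ℝ, l1 v = ∑ i ∈ Λ, |v i| + ∑ i ∈ Λᶜ, |v i| := by
    intro v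
    unfold l1
    rw [← Finset.sum_add_sum_compl Λ]
  have h1 : ∑ i ∈ Λ, |x i| - ∑ i ∈ Λ, |z i| ≤ ∑ i ∈ Λ, |xs i| := by
    rw [← Finset.sum_sub_distrib]
    refine Finset.sum_le_sum (fun i _ => ?_)
    have : xs i = x i - z i := by simp [hz]
    rw [this]; exact abs_sub_abs_le_abs_sub _ _ |>.trans (by simp)
  have h2 : ∑ i ∈ Λᶜ, |z i| - ∑ i ∈ Λᶜ, |x i| ≤ ∑ i ∈ Λᶜ, |xs i| := by
    rw [← Finset.sum_sub_distrib]
    refine Finset.sum_le_sum (fun i _ => ?_)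
    have : xs i = x i - z i := by simp [hz]
    rw [this]
    have := abs_sub_abs_le_abs_sub (z i) (x i)
    have h := abs_sub_comm (z i) (x i)
    calc |z i| - |x i| ≤ |z i - x i| := abs_sub_abs_le_abs_sub _ _
      _ = |x i - z i| := abs_sub_comm _ _
  have hx := hsplit x
  have hxs := hsplit xs
  have key : (1 - γ) * (∑ i ∈ Λᶜ, |z i|) ≤ 2 * ∑ i ∈ Λᶜ, |x i| := by
    nlinarith [hl1]
  have hpos : (0:ℝ) < 1 - γ := by linarith
  rw [div_mul_eq_mul_div, le_div_iff₀ hpos]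
  linarith [key]
end

section
/- Let A ∈ ℝ^{m×N} have the (2k, γ_{2k})-NSP with γ_{2k} < 1, fix 1 ≤ p ≤ 2, and let x, x' ∈ 𝒮^p_{η,k,r} with Ax = Ax'. If r > η (1 + 2 γ_{2k} κ_p), then S_r(x) = S_r(x'), i.e., the index sets of entries exceeding r in absolute value coincide. -/
open Finset

/-- l1 of a restriction is the sum of absolute values over the set. -/
lemma l1_restr {N : ℕ} (T : Finset (Fin N)) (w : Fin N → ℝ) :
    l1 (restr T w) = ∑ j ∈ T, |w j| := by
  unfold l1 restr
  simp only [apply_ite abs, abs_zero]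
  rw [Finset.sum_ite_mem, Finset.univ_inter]

/-- Entries outside `Sr r x` of a class member are at most `η`. -/
lemma classEntry {N : ℕ} {k : ℕ} {p η r : ℝ} (hp : 1 ≤ p) (hη : 0 ≤ η)
    {x : Fin N → ℝ} (hx : inClass p η k r x) {i : Fin N} (hi : i ∉ Sr r x) :
    |x i| ≤ η := by
  have h1 : |x i| ^ p ≤ η ^ p :=
    le_trans (Finset.single_le_sum (fun j _ => Real.rpow_nonneg (abs_nonneg _) p)
      (Finset.mem_compl.mpr hi)) hx.2
  by_contra h
  push_neg at h
  have := Real.rpow_lt_rpow hη h (by linarith : (0:ℝ) < p)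
  linarith

lemma kappa_nonneg {p : ℝ} (N k : ℕ) : 0 ≤ kappa p N k := by
  unfold kappa
  split_ifs
  · norm_num
  · exact Real.rpow_nonneg (by positivity) _

/-- Hölder-type tail bound. -/
lemma tail_le {N k : ℕ} {p η : ℝ} (hp : 1 ≤ p) (hη : 0 ≤ η)
    (T : Finset (Fin N)) (x : Fin N → ℝ)
    (hsum : ∑ i ∈ T, |x i| ^ p ≤ η ^ p) (hT : T.card ≤ N - k) :
    ∑ i ∈ T, |x i| ≤ kappa p N k * η := by
  unfold kappa
  split_ifs with h
  · subst h
    rw [one_mul]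
    calc ∑ i ∈ T, |x i| = ∑ i ∈ T, |x i| ^ (1:ℝ) := by
          simp [Real.rpow_one]
      _ ≤ η ^ (1:ℝ) := hsum
      _ = η := Real.rpow_one η
  · have hp1 : 1 < p := lt_of_le_of_ne hp (Ne.symm h)
    have hpq := Real.HolderConjugate.conjExponent hp1
    set q := Real.conjExponent p with hq
    have hhold := Real.inner_le_Lp_mul_Lq_of_nonneg (s := T)
      (f := fun i => |x i|) (g := fun _ => (1:ℝ)) hpq
      (fun i _ => abs_nonneg _) (fun i _ => zero_le_one)
    simp only [mul_one, Real.one_rpow, Finset.sum_const, nsmul_eq_mul] at hhold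
    have h1 : (∑ i ∈ T, |x i| ^ p) ^ (1 / p) ≤ η := by
      calc (∑ i ∈ T, |x i| ^ p) ^ (1 / p) ≤ (η ^ p) ^ (1 / p) :=
            Real.rpow_le_rpow (Finset.sum_nonneg fun i _ =>
              Real.rpow_nonneg (abs_nonneg _) p) hsum (by positivity)
        _ = η := by
            rw [← Real.rpow_mul hη, mul_one_div, div_self (by positivity : p ≠ 0),
              Real.rpow_one]
    have h2 : ((T.card : ℝ)) ^ (1 / q) ≤ ((N - k : ℕ) : ℝ) ^ (1 - 1 / p) := by
      have hq1 : 1 / q = 1 - 1 / p := by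
        have := hpq.one_sub_inv
        rw [one_div, one_div, this]
      rw [hq1]
      exact Real.rpow_le_rpow (by positivity) (by exact_mod_cast hT)
        (by rw [sub_nonneg, one_div]; exact inv_le_one_of_one_le₀ hp)
    calc ∑ i ∈ T, |x i| ≤ (∑ i ∈ T, |x i| ^ p) ^ (1 / p) * (T.card : ℝ) ^ (1 / q) := hhold
      _ ≤ η * (((N - k : ℕ) : ℝ) ^ (1 - 1 / p)) := by
          apply mul_le_mul h1 h2 (by positivity)
          exact hη
      _ = ((N - k : ℕ) : ℝ) ^ (1 - 1 / p) * η := mul_comm _ _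

theorem stmt5 {m N : ℕ} (A : Matrix (Fin m) (Fin N) ℝ) (k : ℕ) (γ p η r : ℝ)
    (hNSP : NSP A (2 * k) γ) (hγ : γ < 1) (hp : 1 ≤ p) (hp2 : p ≤ 2)
    (hη : 0 ≤ η)
    (x x' : Fin N → ℝ) (hx : inClass p η k r x) (hx' : inClass p η k r x')
    (hfeas : A.mulVec x = A.mulVec x')
    (hr : η * (1 + 2 * γ * kappa p N k) < r) :
    Sr r x = Sr r x' := by
  rcases lt_or_ge γ 0 with hγ0 | hγ0
  · -- γ < 0 : any kernel vector is zero, so x = x'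
    have hker : A.mulVec (x - x') = 0 := by
      rw [Matrix.mulVec_sub, hfeas, sub_self]
    have h0 := hNSP (x - x') hker ∅ (Nat.zero_le _)
    have hL : l1 (restr (∅ : Finset (Fin N)) (x - x')) = 0 := by
      rw [l1_restr]; simp
    have hU : l1 (restr (∅ : Finset (Fin N))ᶜ (x - x')) = ∑ j, |(x - x') j| := by
      rw [l1_restr]; simp
    rw [hL, hU] at h0
    have hnn : 0 ≤ ∑ j, |(x - x') j| :=
      Finset.sum_nonneg fun j _ => abs_nonneg _
    have hzero : ∑ j, |(x - x') j| = 0 := by nlinarith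
    have hxx : x = x' := by
      funext j
      have := (Finset.sum_eq_zero_iff_of_nonneg
        (fun j _ => abs_nonneg ((x - x') j))).mp hzero j (Finset.mem_univ j)
      have : x j - x' j = 0 := by simpa [abs_eq_zero] using this
      linarith
    rw [hxx]
  · -- main case: 0 ≤ γ
    have key : ∀ y y' : Fin N → ℝ, inClass p η k r y → inClass p η k r y' →
        A.mulVec y = A.mulVec y' → Sr r y ⊆ Sr r y' := by
      intro y y' hy hy' hf i hi
      by_contra hi'
      have hker : A.mulVec (y - y') = 0 := by
        rw [Matrix.mulVec_sub, hf, sub_self]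
      have hcu : (Sr r y ∪ Sr r y').card ≤ min (2 * k) N := by
        refine le_min ?_ ?_
        · calc (Sr r y ∪ Sr r y').card ≤ (Sr r y).card + (Sr r y').card :=
              Finset.card_union_le _ _
            _ ≤ 2 * k := by have h1 := hy.1; have h2 := hy'.1; omega
        · calc (Sr r y ∪ Sr r y').card ≤ (Finset.univ : Finset (Fin N)).card :=
              Finset.card_le_card (Finset.subset_univ _)
            _ = N := by simp
      obtain ⟨Λ, hΛ1, -, hΛcard⟩ := Finset.exists_subsuperset_card_eq
        (Finset.subset_univ (Sr r y ∪ Sr r y')) hcu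
        (by simpa using Nat.min_le_right (2 * k) N)
      have hΛ2k : Λ.card ≤ 2 * k := by omega
      have hNS := hNSP (y - y') hker Λ hΛ2k
      rw [l1_restr, l1_restr] at hNS
      have hcompl : Λᶜ.card ≤ N - k := by
        rw [Finset.card_compl, Fintype.card_fin]
        omega
      have hiΛ : i ∈ Λ := hΛ1 (Finset.mem_union_left _ hi)
      have h1 : |(y - y') i| ≤ ∑ j ∈ Λ, |(y - y') j| :=
        Finset.single_le_sum (f := fun j => |(y - y') j|) (fun j _ => abs_nonneg _) hiΛ
      have hsub1 : Λᶜ ⊆ (Sr r y)ᶜ :=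
        Finset.compl_subset_compl.mpr
          (Finset.Subset.trans Finset.subset_union_left hΛ1)
      have hsub2 : Λᶜ ⊆ (Sr r y')ᶜ :=
        Finset.compl_subset_compl.mpr
          (Finset.Subset.trans Finset.subset_union_right hΛ1)
      have hty : ∑ j ∈ Λᶜ, |y j| ^ p ≤ η ^ p :=
        le_trans (Finset.sum_le_sum_of_subset_of_nonneg hsub1
          (fun j _ _ => Real.rpow_nonneg (abs_nonneg _) p)) hy.2
      have hty' : ∑ j ∈ Λᶜ, |y' j| ^ p ≤ η ^ p :=
        le_trans (Finset.sum_le_sum_of_subset_of_nonneg hsub2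
          (fun j _ _ => Real.rpow_nonneg (abs_nonneg _) p)) hy'.2
      have hby := tail_le hp hη Λᶜ y hty hcompl
      have hby' := tail_le hp hη Λᶜ y' hty' hcompl
      have hzsplit : ∑ j ∈ Λᶜ, |(y - y') j| ≤
          (∑ j ∈ Λᶜ, |y j|) + ∑ j ∈ Λᶜ, |y' j| := by
        rw [← Finset.sum_add_distrib]
        exact Finset.sum_le_sum fun j _ => by
          simpa using abs_sub (y j) (y' j)
      have hyi : |y' i| ≤ η := classEntry hp hη hy' hi'
      have hκ : 0 ≤ kappa p N k := kappa_nonneg N k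
      have hri : r < |y i| := by
        have := hi
        simp only [Sr, Finset.mem_filter] at this
        exact this.2
      have hzi : |y i| ≤ |y' i| + |(y - y') i| := by
        have : y i = y' i + (y - y') i := by simp
        rw [this]
        exact abs_add_le _ _
      have hchain : γ * (∑ j ∈ Λᶜ, |(y - y') j|) ≤
          γ * (kappa p N k * η + kappa p N k * η) :=
        mul_le_mul_of_nonneg_left
          (le_trans hzsplit (add_le_add hby hby')) hγ0
      have heq : η + γ * (kappa p N k * η + kappa p N k * η) =
          η * (1 + 2 * γ * kappa p N k) := by ring
      linarith
    exact Finset.Subset.antisymm (key x x' hx hx' hfeas) (key x' x hx' hx hfeas.symm)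
end

section
/- In the setting of the selective p-potential theorem: if 𝒮𝒫(x*) ≤ 𝒮𝒫(x), x ∈ 𝒮^p_{η,k,r+ε} with η < r, and x has minimal #S_{r+ε} among feasible vectors, then #S_{r+ε}(x*) ≤ (η/r)^p + #S_{r+ε}(x), and hence, since (η/r)^p < 1 and cardinalities are integers and x is support-minimal, #S_{r+ε}(x*) = #S_{r+ε}(x). -/
open Finset

theorem stmt11 {m N : ℕ} (A : Matrix (Fin m) (Fin N) ℝ) (k : ℕ)
    (p ε η r : ℝ) (hp : 1 ≤ p) (hp2 : p ≤ 2)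
    (hε : 0 < ε) (hη0 : 0 ≤ η) (hη : η < r)
    (w : ℝ → ℝ) (hw0 : ∀ t, 0 ≤ w t) (hw1 : ∀ t, w t ≤ |t| ^ p)
    (SP : (Fin N → ℝ) → ℝ)
    (hSP : ∀ z : Fin N → ℝ,
      SP z = r ^ p * ((Sr (r + ε) z).card : ℝ) + ∑ i ∈ (Sr (r + ε) z)ᶜ, w (z i))
    (x xs : Fin N → ℝ) (hx : inClass p η k (r + ε) x)
    (hminsupp : ∀ z : Fin N → ℝ, A.mulVec z = A.mulVec x →
      (Sr (r + ε) x).card ≤ (Sr (r + ε) z).card)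
    (hfeas : A.mulVec xs = A.mulVec x)
    (hSPle : SP xs ≤ SP x) :
    ((Sr (r + ε) xs).card : ℝ) ≤ (η / r) ^ p + ((Sr (r + ε) x).card : ℝ) ∧
    (Sr (r + ε) xs).card = (Sr (r + ε) x).card := by
  have hr : 0 < r := lt_of_le_of_lt hη0 hη
  have hrp : 0 < r ^ p := Real.rpow_pos_of_pos hr p
  have h1 : r ^ p * ((Sr (r + ε) xs).card : ℝ) ≤ SP xs := by
    rw [hSP xs]
    have : (0:ℝ) ≤ ∑ i ∈ (Sr (r + ε) xs)ᶜ, w (xs i) :=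
      Finset.sum_nonneg fun i _ => hw0 _
    linarith
  have h2 : SP x ≤ r ^ p * ((Sr (r + ε) x).card : ℝ) + η ^ p := by
    rw [hSP x]
    have hs : ∑ i ∈ (Sr (r + ε) x)ᶜ, w (x i) ≤ ∑ i ∈ (Sr (r + ε) x)ᶜ, |x i| ^ p :=
      Finset.sum_le_sum fun i _ => hw1 _
    have := hx.2
    linarith
  have key : r ^ p * ((Sr (r + ε) xs).card : ℝ) ≤ r ^ p * ((Sr (r + ε) x).card : ℝ) + η ^ p := by
    linarith
  have hdiv : (η / r) ^ p = η ^ p / r ^ p := Real.div_rpow hη0 hr.le p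
  have goal1 : ((Sr (r + ε) xs).card : ℝ) ≤ (η / r) ^ p + ((Sr (r + ε) x).card : ℝ) := by
    have h3 : ((Sr (r + ε) xs).card : ℝ) ≤
        (r ^ p * ((Sr (r + ε) x).card : ℝ) + η ^ p) / r ^ p := by
      rw [le_div_iff₀ hrp]; nlinarith
    rw [hdiv]
    refine h3.trans_eq ?_
    field_simp
    ring
  refine ⟨goal1, ?_⟩
  have hlt1 : (η / r) ^ p < 1 := by
    apply Real.rpow_lt_one (by positivity) _ (by linarith)
    rw [div_lt_one hr]; exact hη
  have : ((Sr (r + ε) xs).card : ℝ) < ((Sr (r + ε) x).card : ℝ) + 1 := by linarith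
  have hle : (Sr (r + ε) xs).card ≤ (Sr (r + ε) x).card := by
    exact_mod_cast Nat.lt_succ_iff.mp (by exact_mod_cast this)
  exact le_antisymm hle (hminsupp xs hfeas)
end

section
/- Let A ∈ ℝ^{m×N} with operator norm ‖A‖ ≤ 1 and (2k, δ_{2k})-RIP, δ_{2k} < 1, and β(A) > 0 such that sup_i |A_iᵀ z| ≥ β(A)‖z‖₂ for all z ∈ ℝ^m, where A_i are the columns of A. Let x ∈ 𝒮^p_{η,k,r}, y = Ax, and suppose r > η(1 + (1/(1−δ_{2k}))(1 + 1/β(A))) and η < √τ < (r − η/(1−δ_{2k}))/(1 + 1/((1−δ_{2k})β(A))). Let x^IHT be a fixed point of the iterative hard thresholding map z ↦ H_{√τ}(z + Aᵀ(y − Az)) satisfying 𝒥₀(x^IHT) ≤ 𝒥₀(x|_{S_r(x)}), where 𝒥₀(z) = ‖Az − y‖₂² + τ·#supp(z). Assume additionally the fixed-point residual bound ‖A x^IHT − y‖₂ ≤ √τ/β(A). Then supp(x^IHT) = S_r(x) and |x_i − x^IHT_i| < r − √τ for all i ∈ S_r(x). -/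
open Finset

section Helpers

lemma l2_nonneg {n : ℕ} (x : Fin n → ℝ) : 0 ≤ l2 x := Real.sqrt_nonneg _

lemma sum_sq_nonneg' {n : ℕ} (x : Fin n → ℝ) : 0 ≤ ∑ i, (x i) ^ 2 :=
  Finset.sum_nonneg fun i _ => sq_nonneg _

lemma l2_sq {n : ℕ} (x : Fin n → ℝ) : l2 x ^ 2 = ∑ i, (x i) ^ 2 :=
  Real.sq_sqrt (sum_sq_nonneg' x)

lemma l2_le_l2 {n : ℕ} {x y : Fin n → ℝ} (h : ∀ i, (x i) ^ 2 ≤ (y i) ^ 2) :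
    l2 x ≤ l2 y :=
  Real.sqrt_le_sqrt (Finset.sum_le_sum fun i _ => h i)

lemma abs_le_l2 {n : ℕ} (x : Fin n → ℝ) (i : Fin n) : |x i| ≤ l2 x := by
  rw [← Real.sqrt_sq_eq_abs]
  exact Real.sqrt_le_sqrt (Finset.single_le_sum (fun j _ => sq_nonneg (x j)) (Finset.mem_univ i))

lemma l2_eq_norm {n : ℕ} (x : Fin n → ℝ) :
    l2 x = ‖(WithLp.equiv 2 (Fin n → ℝ)).symm x‖ := by
  rw [EuclideanSpace.norm_eq]
  simp [l2, sq_abs]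

lemma l2_neg {n : ℕ} (x : Fin n → ℝ) : l2 (-x) = l2 x := by
  simp [l2, neg_sq]

lemma l2_sub_le {n : ℕ} (x y : Fin n → ℝ) : l2 (x - y) ≤ l2 x + l2 y := by
  rw [l2_eq_norm, l2_eq_norm, l2_eq_norm]
  exact norm_sub_le ((WithLp.equiv 2 (Fin n → ℝ)).symm x) ((WithLp.equiv 2 (Fin n → ℝ)).symm y)

lemma restr_add_compl {N : ℕ} (Λ : Finset (Fin N)) (z : Fin N → ℝ) :
    restr Λ z + restr Λᶜ z = z := by
  funext i
  by_cases h : i ∈ Λ <;> simp [restr, Finset.mem_compl, h]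

lemma supp_restr_subset {N : ℕ} (Λ : Finset (Fin N)) (z : Fin N → ℝ) :
    supp (restr Λ z) ⊆ Λ := by
  intro i hi
  simp only [supp, Finset.mem_filter] at hi
  by_contra h
  exact hi.2 (by simp [restr, h])

lemma lp_le_sq {N : ℕ} {s : Finset (Fin N)} {x : Fin N → ℝ} {p η : ℝ}
    (hp : 1 ≤ p) (hp2 : p ≤ 2) (hη : 0 ≤ η)
    (hx : ∑ i ∈ s, |x i| ^ p ≤ η ^ p) : ∑ i ∈ s, (x i) ^ 2 ≤ η ^ 2 := by
  have hp0 : 0 < p := lt_of_lt_of_le one_pos hp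
  set t : ℝ := ∑ i ∈ s, |x i| ^ p with ht
  have htn : 0 ≤ t := Finset.sum_nonneg fun i _ => Real.rpow_nonneg (abs_nonneg _) p
  have hM : ∀ i ∈ s, |x i| ≤ t ^ (1 / p) := by
    intro i hi
    have h1 : |x i| ^ p ≤ t :=
      Finset.single_le_sum (fun j _ => Real.rpow_nonneg (abs_nonneg _) p) hi
    have h2 := Real.rpow_le_rpow (Real.rpow_nonneg (abs_nonneg _) p) h1
      (by positivity : (0:ℝ) ≤ 1 / p)
    rwa [← Real.rpow_mul (abs_nonneg _), mul_one_div_cancel hp0.ne', Real.rpow_one] at h2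
  have key : ∀ i ∈ s, (x i) ^ 2 ≤ t ^ ((2 - p) / p) * |x i| ^ p := by
    intro i hi
    have h0 : (x i) ^ 2 = |x i| ^ ((2 - p) + p) := by
      rw [show (2 - p) + p = ((2:ℕ):ℝ) by push_cast; ring, Real.rpow_natCast, sq_abs]
    rw [h0, Real.rpow_add' (abs_nonneg _) (by rw [sub_add_cancel]; norm_num)]
    have hb : |x i| ^ (2 - p) ≤ t ^ ((2 - p) / p) := by
      have h3 := Real.rpow_le_rpow (abs_nonneg _) (hM i hi) (by linarith : (0:ℝ) ≤ 2 - p)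
      rwa [← Real.rpow_mul htn, one_div_mul_eq_div] at h3
    exact mul_le_mul_of_nonneg_right hb (Real.rpow_nonneg (abs_nonneg _) _)
  have hnz : (2 - p) / p + 1 ≠ 0 := by
    have h1 : 0 ≤ (2 - p) / p := div_nonneg (by linarith) hp0.le
    intro hc; linarith
  calc ∑ i ∈ s, (x i) ^ 2 ≤ ∑ i ∈ s, t ^ ((2 - p) / p) * |x i| ^ p :=
        Finset.sum_le_sum key
    _ = t ^ ((2 - p) / p) * t := by rw [← Finset.mul_sum]
    _ = t ^ ((2 - p) / p + 1) := by
        rw [Real.rpow_add' htn hnz, Real.rpow_one]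
    _ = t ^ (2 / p) := by
        congr 1; field_simp; ring
    _ ≤ (η ^ p) ^ (2 / p) := Real.rpow_le_rpow htn hx (by positivity)
    _ = η ^ 2 := by
        rw [← Real.rpow_mul hη, show p * (2 / p) = ((2:ℕ):ℝ) by push_cast; field_simp,
          Real.rpow_natCast]

end Helpers

theorem stmt12 {m N : ℕ} (A : Matrix (Fin m) (Fin N) ℝ) (k : ℕ)
    (δ β p η r τ : ℝ)
    (hAnorm : ∀ z : Fin N → ℝ, l2 (A.mulVec z) ≤ l2 z)
    (hRIP : RIP A (2 * k) δ) (hδ : δ < 1)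
    (hβ : 0 < β)
    (hβA : ∀ z : Fin m → ℝ, ∃ i : Fin N, β * l2 z ≤ |A.transpose.mulVec z i|)
    (hp : 1 ≤ p) (hp2 : p ≤ 2) (hη : 0 ≤ η)
    (x : Fin N → ℝ) (hx : inClass p η k r x)
    (hr : η * (1 + (1 / (1 - δ)) * (1 + 1 / β)) < r)
    (hτ1 : η < Real.sqrt τ)
    (hτ2 : Real.sqrt τ < (r - η / (1 - δ)) / (1 + 1 / ((1 - δ) * β)))
    (xIHT : Fin N → ℝ)
    (hfix : xIHT =
      hardThr (Real.sqrt τ) (xIHT + A.transpose.mulVec (A.mulVec x - A.mulVec xIHT)))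
    (hJ : l2 (A.mulVec xIHT - A.mulVec x) ^ 2 + τ * ((supp xIHT).card : ℝ) ≤
      l2 (A.mulVec (restr (Sr r x) x) - A.mulVec x) ^ 2 +
        τ * ((supp (restr (Sr r x) x)).card : ℝ))
    (hres : l2 (A.mulVec xIHT - A.mulVec x) ≤ Real.sqrt τ / β) :
    supp xIHT = Sr r x ∧ ∀ i ∈ Sr r x, |x i - xIHT i| < r - Real.sqrt τ := by
    classical
  have hδ' : 0 < 1 - δ := by linarith
  have hst0 : 0 < Real.sqrt τ := lt_of_le_of_lt hη hτ1
  have hτpos : 0 < τ := Real.sqrt_pos.mp hst0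
  set S : Finset (Fin N) := Sr r x with hSdef
  set T : Finset (Fin N) := supp xIHT with hTdef
  -- tail bound in l2
  have htail : l2 (restr Sᶜ x) ≤ η := by
    have h1 : ∑ i, (restr Sᶜ x i) ^ 2 = ∑ i ∈ Sᶜ, (x i) ^ 2 := by
      calc ∑ i, (restr Sᶜ x i) ^ 2 = ∑ i ∈ Sᶜ, (restr Sᶜ x i) ^ 2 :=
            (Finset.sum_subset (Finset.subset_univ _)
              (fun i _ hi => by simp [restr, hi])).symm
        _ = ∑ i ∈ Sᶜ, (x i) ^ 2 := Finset.sum_congr rfl (fun i hi => by simp [restr, hi])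
    have h2 : ∑ i ∈ Sᶜ, (x i) ^ 2 ≤ η ^ 2 := lp_le_sq hp hp2 hη hx.2
    rw [l2, h1]
    calc Real.sqrt (∑ i ∈ Sᶜ, (x i) ^ 2) ≤ Real.sqrt (η ^ 2) := Real.sqrt_le_sqrt h2
      _ = η := Real.sqrt_sq hη
  -- Step 1 : card T ≤ card S
  have hcardTS : T.card ≤ S.card := by
    have hsplit : restr S x - x = -(restr Sᶜ x) := by
      funext i
      by_cases h : i ∈ S <;> simp [restr, Finset.mem_compl, h]
    have hAres : l2 (A.mulVec (restr S x) - A.mulVec x) ≤ η := by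
      rw [← Matrix.mulVec_sub, hsplit, Matrix.mulVec_neg, l2_neg]
      exact (hAnorm _).trans htail
    have hsq : l2 (A.mulVec (restr S x) - A.mulVec x) ^ 2 ≤ η ^ 2 :=
      pow_le_pow_left₀ (l2_nonneg _) hAres 2
    have hcard : ((supp (restr S x)).card : ℝ) ≤ (S.card : ℝ) := by
      exact_mod_cast Finset.card_le_card (supp_restr_subset S x)
    have hη2 : η ^ 2 < τ := by
      nlinarith [Real.sq_sqrt hτpos.le, Real.sqrt_nonneg τ]
    have h0 : 0 ≤ l2 (A.mulVec xIHT - A.mulVec x) ^ 2 := sq_nonneg _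
    have hlt : τ * (T.card : ℝ) < τ * ((S.card : ℝ) + 1) := by nlinarith
    have := (mul_lt_mul_iff_right₀ hτpos).mp hlt
    exact_mod_cast Nat.lt_add_one_iff.mp (by exact_mod_cast this)
  -- Step 2 : bound on restr (S ∪ T) (x - xIHT)
  set U : Finset (Fin N) := S ∪ T with hUdef
  set h : Fin N → ℝ := x - xIHT with hhdef
  have hUcard : (supp (restr U h)).card ≤ 2 * k := by
    calc (supp (restr U h)).card ≤ U.card := Finset.card_le_card (supp_restr_subset U h)
      _ ≤ S.card + T.card := Finset.card_union_le S T
      _ ≤ k + k := add_le_add hx.1 (hcardTS.trans hx.1)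
      _ = 2 * k := by ring
  have hAh : l2 (A.mulVec h) ≤ Real.sqrt τ / β := by
    have e : A.mulVec h = -(A.mulVec xIHT - A.mulVec x) := by
      rw [hhdef, Matrix.mulVec_sub, neg_sub]
    rw [e, l2_neg]; exact hres
  have hrestr_compl : restr Uᶜ h = restr Uᶜ x := by
    funext i
    by_cases hiU : i ∈ Uᶜ
    · have hiT : i ∉ T := fun hT' => (Finset.mem_compl.mp hiU) (Finset.mem_union_right _ hT')
      have : xIHT i = 0 := by
        by_contra hne
        exact hiT (by simp [hTdef, supp, hne])
      simp [restr, hiU, hhdef, this]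
    · simp [restr, hiU]
  have hUc_le : l2 (restr Uᶜ h) ≤ η := by
    rw [hrestr_compl]
    refine le_trans (l2_le_l2 ?_) htail
    intro i
    by_cases hiU : i ∈ Uᶜ
    · have hiS : i ∈ Sᶜ := Finset.mem_compl.mpr
        (fun hS' => (Finset.mem_compl.mp hiU) (Finset.mem_union_left _ hS'))
      simp [restr, hiU, hiS]
    · have hz : restr Uᶜ x i = 0 := by simp [restr, hiU]
      rw [hz]
      simpa using sq_nonneg (restr Sᶜ x i)
  have hAU : l2 (A.mulVec (restr U h)) ≤ Real.sqrt τ / β + η := by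
    have ev : restr U h = h - restr Uᶜ h := by
      funext i
      have hc := congrFun (restr_add_compl U h) i
      simp only [Pi.add_apply] at hc
      simp only [Pi.sub_apply]
      linarith
    have e : A.mulVec (restr U h) = A.mulVec h - A.mulVec (restr Uᶜ h) := by
      rw [← Matrix.mulVec_sub, ev]
    rw [e]
    calc l2 (A.mulVec h - A.mulVec (restr Uᶜ h)) ≤
        l2 (A.mulVec h) + l2 (A.mulVec (restr Uᶜ h)) := l2_sub_le _ _
      _ ≤ Real.sqrt τ / β + η := add_le_add hAh ((hAnorm _).trans hUc_le)
  have hUbound : l2 (restr U h) ≤ (Real.sqrt τ / β + η) / (1 - δ) := by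
    rw [le_div_iff₀ hδ']
    calc l2 (restr U h) * (1 - δ) = (1 - δ) * l2 (restr U h) := by ring
      _ ≤ l2 (A.mulVec (restr U h)) := (hRIP _ hUcard).1
      _ ≤ Real.sqrt τ / β + η := hAU
  -- key arithmetic
  have hkey : (Real.sqrt τ / β + η) / (1 - δ) < r - Real.sqrt τ := by
    have hden : 0 < 1 + 1 / ((1 - δ) * β) := by positivity
    have h2 : Real.sqrt τ * (1 + 1 / ((1 - δ) * β)) < r - η / (1 - δ) :=
      (lt_div_iff₀ hden).mp hτ2
    rw [div_lt_iff₀ hδ']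
    have e1 : Real.sqrt τ * (1 + 1 / ((1 - δ) * β)) * (1 - δ)
        = Real.sqrt τ * (1 - δ) + Real.sqrt τ / β := by
      field_simp
    have e2 : (r - η / (1 - δ)) * (1 - δ) = r * (1 - δ) - η := by
      field_simp
    have h3 := mul_lt_mul_of_pos_right h2 hδ'
    rw [e1, e2] at h3
    nlinarith
  have hptbound : ∀ i ∈ U, |x i - xIHT i| < r - Real.sqrt τ := by
    intro i hi
    have e : x i - xIHT i = restr U h i := by simp [restr, hi, hhdef]
    rw [e]
    exact lt_of_le_of_lt ((abs_le_l2 _ i).trans hUbound) hkey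
  -- Step 3 : S ⊆ T
  have hST : S ⊆ T := by
    intro i hiS
    by_contra hiT
    have hx0 : xIHT i = 0 := by
      by_contra hne
      exact hiT (by simp [hTdef, supp, hne])
    have hri : r < |x i| := by
      have := hiS
      rw [hSdef, Sr, Finset.mem_filter] at this
      exact this.2
    have hb := hptbound i (Finset.mem_union_left _ hiS)
    rw [hx0, sub_zero] at hb
    linarith [hst0]
  have hTS : T = S := (Finset.eq_of_subset_of_card_le hST hcardTS).symm
  exact ⟨hTS, fun i hi => hptbound i (Finset.mem_union_left _ hi)⟩
end

section
/- First step of the IHT support theorem: under ‖A‖ ≤ 1, x ∈ 𝒮^p_{η,k,r} with ‖x|_{S_r(x)ᶜ}‖₂ ≤ η, τ > η², and the condition 𝒥₀(x^IHT) ≤ 𝒥₀(x|_{S_r(x)}) where 𝒥₀(z) = ‖Az − Ax‖₂² + τ·#supp(z), one has #supp(x^IHT) ≤ #S_r(x). -/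
open Finset

theorem stmt13 {m N : ℕ} (A : Matrix (Fin m) (Fin N) ℝ) (k : ℕ)
    (p η r τ : ℝ)
    (hAnorm : ∀ z : Fin N → ℝ, l2 (A.mulVec z) ≤ l2 z)
    (hp : 1 ≤ p) (hp2 : p ≤ 2) (hη : 0 ≤ η)
    (x : Fin N → ℝ) (hx : inClass p η k r x)
    (htail2 : l2 (restr (Sr r x)ᶜ x) ≤ η)
    (hτ : η ^ 2 < τ)
    (xIHT : Fin N → ℝ)
    (hJ : l2 (A.mulVec xIHT - A.mulVec x) ^ 2 + τ * ((supp xIHT).card : ℝ) ≤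
      l2 (A.mulVec (restr (Sr r x) x) - A.mulVec x) ^ 2 +
        τ * ((supp (restr (Sr r x) x)).card : ℝ)) :
    (supp xIHT).card ≤ (Sr r x).card := by
  set S := Sr r x with hS
  have hl2nonneg : ∀ {n : ℕ} (z : Fin n → ℝ), 0 ≤ l2 z := fun z => Real.sqrt_nonneg _
  -- restr S x - x = - restr Sᶜ x
  have hdiff : restr S x - x = -(restr Sᶜ x) := by
    funext i
    simp only [restr, Pi.sub_apply, Pi.neg_apply, Finset.mem_compl]
    by_cases h : i ∈ S <;> simp [h]
  have hneg : ∀ {n : ℕ} (z : Fin n → ℝ), l2 (-z) = l2 z := by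
    intro n z; unfold l2; congr 1; apply Finset.sum_congr rfl; intros
    simp [Pi.neg_apply]
  have h1 : l2 (A.mulVec (restr S x) - A.mulVec x) ≤ η := by
    rw [← Matrix.mulVec_sub, hdiff, Matrix.mulVec_neg, hneg]
    exact le_trans (hAnorm _) htail2
  have h1sq : l2 (A.mulVec (restr S x) - A.mulVec x) ^ 2 ≤ η ^ 2 :=
    pow_le_pow_left₀ (hl2nonneg _) h1 2
  have hsupp : supp (restr S x) ⊆ S := by
    intro i hi
    unfold supp at hi; rw [Finset.mem_filter] at hi; simp only [restr] at hi
    by_contra h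
    exact hi.2 (by simp [h])
  have hcard : ((supp (restr S x)).card : ℝ) ≤ (S.card : ℝ) := by
    exact_mod_cast Finset.card_le_card hsupp
  have hτpos : 0 < τ := lt_of_le_of_lt (sq_nonneg η) hτ
  by_contra hcon
  push_neg at hcon
  have hge : (S.card : ℝ) + 1 ≤ ((supp xIHT).card : ℝ) := by exact_mod_cast hcon
  have key : τ * ((S.card : ℝ) + 1) ≤ η ^ 2 + τ * (S.card : ℝ) := by
    have h0 : 0 ≤ l2 (A.mulVec xIHT - A.mulVec x) ^ 2 := sq_nonneg _
    nlinarith [hJ, h1sq, hcard, mul_le_mul_of_nonneg_left hge (le_of_lt hτpos),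
      mul_le_mul_of_nonneg_left hcard (le_of_lt hτpos)]
  nlinarith
end
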